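/- Kernel estimate for the magnetic projector: let Π_L(x,y) = (1/√π) Σ_{k,q ∈ ℤ} exp( (i/2)(qL+x₁+y₁)(kL+x₂−y₂) + i q y₂ − (1/4)(kL+x₂−y₂)² − (1/4)(qL−x₁+y₁)² ). Then there is a universal constant C with sup_{x ∈ K_L} ∫_{K_L} |Π_L(x,y)| dy ≤ C for all L ≥ 1. -/

import Mathlib

open MeasureTheory Real

/-- The square `K_L = [−L/2, L/2]²`. -/
def Kset (L : ℝ) : Set (ℝ × ℝ) := Set.Icc (-(L / 2)) (L / 2) ×ˢ Set.Icc (-(L / 2)) (L / 2)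

/-- The kernel of the projector onto the finite-dimensional lowest Landau level:
`Π_L(x,y) = (1/√π) Σ_{k,q ∈ ℤ} exp((i/2)(qL+x₁+y₁)(kL+x₂−y₂) + i q y₂
  − (1/4)(kL+x₂−y₂)² − (1/4)(qL−x₁+y₁)²)`. -/
noncomputable def PiL (L : ℝ) (x y : ℝ × ℝ) : ℂ :=
  ((1 / Real.sqrt Real.pi : ℝ) : ℂ) * ∑' kq : ℤ × ℤ,
    Complex.exp ((Complex.I / 2) * ((kq.2 : ℂ) * (L : ℂ) + (x.1 : ℂ) + (y.1 : ℂ))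
        * ((kq.1 : ℂ) * (L : ℂ) + (x.2 : ℂ) - (y.2 : ℂ))
      + Complex.I * (kq.2 : ℂ) * (y.2 : ℂ)
      - (1 / 4) * ((kq.1 : ℂ) * (L : ℂ) + (x.2 : ℂ) - (y.2 : ℂ)) ^ 2
      - (1 / 4) * ((kq.2 : ℂ) * (L : ℂ) - (x.1 : ℂ) + (y.1 : ℂ)) ^ 2)

noncomputable def Gg (t : ℝ) : ℝ := Real.exp (-(1/4) * t^2)

lemma Gg_nonneg (t : ℝ) : 0 ≤ Gg t := (Real.exp_pos _).le

lemma Gg_le_one (t : ℝ) : Gg t ≤ 1 := by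
  have : -(1/4) * t^2 ≤ 0 := by nlinarith [sq_nonneg t]
  calc Gg t ≤ Real.exp 0 := Real.exp_le_exp.2 this
  _ = 1 := Real.exp_zero

noncomputable def Ee (n : ℤ) : ℝ := Real.exp 1 * Real.exp (-(1/4) * ((n.natAbs : ℝ) - 1)^2)

lemma sumENat : Summable (fun n : ℕ => Real.exp (-(1/4) * ((n : ℝ) - 1)^2)) := by
  refine Summable.of_nonneg_of_le (fun n => (Real.exp_pos _).le) (fun n => ?_)
    (((summable_geometric_of_lt_one (Real.exp_pos _).le
      (Real.exp_lt_one_iff.2 (by norm_num))).mul_left (Real.exp (1/4)) : Summable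
        (fun n : ℕ => Real.exp (1/4) * Real.exp (-(1/4)) ^ n)))
  ·
    rw [← Real.exp_nat_mul, ← Real.exp_add]
    apply Real.exp_le_exp.2
    rcases n with _ | _ | n
    · norm_num
    · norm_num
    · push_cast
      nlinarith [sq_nonneg ((n:ℝ)), Nat.cast_nonneg (α := ℝ) n]

lemma sumE : Summable Ee := by
  apply Summable.mul_left
  apply Summable.of_nat_of_neg
  · simpa using sumENat
  · simp only [Int.natAbs_neg, Int.natAbs_natCast]
    exact sumENat

lemma Gg_le_Ee {L : ℝ} (hL : 1 ≤ L) (k : ℤ) {c : ℝ} (hc : |c| ≤ L) :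
    Gg ((k : ℝ) * L + c) ≤ Ee k := by
  rcases eq_or_ne k 0 with rfl | hk
  · calc Gg ((0:ℤ) * L + c) ≤ 1 := Gg_le_one _
    _ ≤ Ee 0 := by
        rw [Ee]
        rw [← Real.exp_add, ← Real.exp_zero]
        apply Real.exp_le_exp.2
        norm_num
  · have h1 : (1:ℝ) ≤ (k.natAbs : ℝ) := by
      have := Int.one_le_abs (by simpa using hk)
      calc (1:ℝ) ≤ ((|k| : ℤ) : ℝ) := by exact_mod_cast this
      _ = (k.natAbs : ℝ) := by push_cast [Nat.cast_natAbs]; ring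
    have habs : (k.natAbs : ℝ) - 1 ≤ |(k : ℝ) * L + c| := by
      have h2 : |(k:ℝ) * L| - |(-c)| ≤ |(k:ℝ) * L - (-c)| := abs_sub_abs_le_abs_sub _ _
      have h3 : |(k:ℝ) * L| = (k.natAbs : ℝ) * L := by
        rw [abs_mul, abs_of_pos (by linarith : (0:ℝ) < L)]
        congr 1
        push_cast [Nat.cast_natAbs]; ring
      have h4 : (k.natAbs : ℝ) * L - L ≥ (k.natAbs : ℝ) - 1 := by nlinarith
      rw [abs_neg] at h2
      rw [sub_neg_eq_add] at h2
      linarith [h3 ▸ h2]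
    have hsq : ((k.natAbs : ℝ) - 1)^2 ≤ ((k : ℝ) * L + c)^2 := by
      rw [← sq_abs ((k : ℝ) * L + c)]
      apply pow_le_pow_left₀ (by linarith) habs
    calc Gg ((k : ℝ) * L + c) ≤ Real.exp (-(1/4) * ((k.natAbs : ℝ) - 1)^2) := by
          apply Real.exp_le_exp.2; nlinarith
    _ ≤ Ee k := by
        rw [Ee]
        nlinarith [Real.exp_pos (-(1/4) * ((k.natAbs : ℝ) - 1)^2), Real.one_le_exp (by norm_num : (0:ℝ) ≤ 1)]

lemma term_norm (L : ℝ) (x y : ℝ × ℝ) (kq : ℤ × ℤ) :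
    ‖Complex.exp ((Complex.I / 2) * ((kq.2 : ℂ) * (L : ℂ) + (x.1 : ℂ) + (y.1 : ℂ))
        * ((kq.1 : ℂ) * (L : ℂ) + (x.2 : ℂ) - (y.2 : ℂ))
      + Complex.I * (kq.2 : ℂ) * (y.2 : ℂ)
      - (1 / 4) * ((kq.1 : ℂ) * (L : ℂ) + (x.2 : ℂ) - (y.2 : ℂ)) ^ 2
      - (1 / 4) * ((kq.2 : ℂ) * (L : ℂ) - (x.1 : ℂ) + (y.1 : ℂ)) ^ 2)‖
      = Gg ((kq.2 : ℝ) * L - x.1 + y.1) * Gg ((kq.1 : ℝ) * L + x.2 - y.2) := by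
  obtain ⟨k, q⟩ := kq
  rw [Complex.norm_exp]
  have hz : (Complex.I / 2) * ((q : ℂ) * (L : ℂ) + (x.1 : ℂ) + (y.1 : ℂ))
        * ((k : ℂ) * (L : ℂ) + (x.2 : ℂ) - (y.2 : ℂ))
      + Complex.I * (q : ℂ) * (y.2 : ℂ)
      - (1 / 4) * ((k : ℂ) * (L : ℂ) + (x.2 : ℂ) - (y.2 : ℂ)) ^ 2
      - (1 / 4) * ((q : ℂ) * (L : ℂ) - (x.1 : ℂ) + (y.1 : ℂ)) ^ 2
      = ((-(1/4) * ((k : ℝ) * L + x.2 - y.2)^2 + -(1/4) * ((q : ℝ) * L - x.1 + y.1)^2 : ℝ) : ℂ)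
        + (((q * L + x.1 + y.1) * (k * L + x.2 - y.2)/2 + q * y.2 : ℝ) : ℂ) * Complex.I := by
    push_cast
    ring
  rw [hz]
  simp only [Complex.add_re, Complex.ofReal_re, Complex.mul_re, Complex.I_re, Complex.I_im,
    Complex.ofReal_im, mul_zero, zero_mul, mul_one, sub_zero, zero_sub]
  rw [Gg, Gg, ← Real.exp_add]
  ring_nf

lemma hasSum_Gg {L : ℝ} (c : ℝ) (hL : 0 < L) :
    HasSum (fun k : ℤ => ∫ t in ((k:ℝ)*L + c)..((k:ℝ)*L + c + L), Gg t)
      (2 * Real.sqrt Real.pi) := by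
  have hL' : L ≠ 0 := ne_of_gt hL
  have hGg : ∀ s : ℝ, Gg (L * s) = Real.exp (-(L^2/4) * s^2) := by
    intro s; rw [Gg]; ring_nf
  have hb : (0:ℝ) < L^2/4 := by positivity
  have hint : Integrable (fun s : ℝ => L * Gg (L * s)) := by
    simp_rw [hGg]
    exact (integrable_exp_neg_mul_sq hb).const_mul L
  have H := hint.hasSum_intervalIntegral (c / L)
  have hkey : ∀ k : ℤ, (∫ s in (c/L + (k:ℝ))..(c/L + (k:ℝ) + 1), L * Gg (L * s))
      = ∫ t in ((k:ℝ)*L + c)..((k:ℝ)*L + c + L), Gg t := by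
    intro k
    rw [intervalIntegral.integral_const_mul, ← smul_eq_mul,
      intervalIntegral.smul_integral_comp_mul_left Gg L]
    congr 1 <;> field_simp <;> ring
  have htotal : (∫ s : ℝ, L * Gg (L * s)) = 2 * Real.sqrt Real.pi := by
    simp_rw [hGg]
    rw [MeasureTheory.integral_const_mul, integral_gaussian]
    rw [show Real.pi / (L^2/4) = (2/L)^2 * Real.pi by field_simp; ring]
    rw [Real.sqrt_mul (sq_nonneg _), Real.sqrt_sq (by positivity : (0:ℝ) ≤ 2/L)]
    field_simp
  rw [htotal] at H
  simp_rw [← hkey]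
  exact H

lemma hasSum_A {L : ℝ} (hL : 0 < L) (a : ℝ) :
    HasSum (fun k : ℤ => ∫ y in Set.Icc (-(L/2)) (L/2), Gg ((k:ℝ)*L + a - y))
      (2 * Real.sqrt Real.pi) := by
  have key : ∀ k : ℤ, (∫ y in Set.Icc (-(L/2)) (L/2), Gg ((k:ℝ)*L + a - y))
      = ∫ t in ((k:ℝ)*L + (a - L/2))..((k:ℝ)*L + (a - L/2) + L), Gg t := by
    intro k
    rw [MeasureTheory.integral_Icc_eq_integral_Ioc,
      ← intervalIntegral.integral_of_le (by linarith : -(L/2) ≤ L/2),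
      intervalIntegral.integral_comp_sub_left (fun t => Gg t) ((k:ℝ)*L + a)]
    congr 1 <;> ring
  simp_rw [key]
  exact hasSum_Gg (a - L/2) hL

lemma hasSum_B {L : ℝ} (hL : 0 < L) (b : ℝ) :
    HasSum (fun q : ℤ => ∫ y in Set.Icc (-(L/2)) (L/2), Gg ((q:ℝ)*L - b + y))
      (2 * Real.sqrt Real.pi) := by
  have key : ∀ q : ℤ, (∫ y in Set.Icc (-(L/2)) (L/2), Gg ((q:ℝ)*L - b + y))
      = ∫ t in ((q:ℝ)*L + (-b - L/2))..((q:ℝ)*L + (-b - L/2) + L), Gg t := by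
    intro q
    have : ∀ y : ℝ, Gg ((q:ℝ)*L - b + y) = Gg (y + ((q:ℝ)*L - b)) := by
      intro y; congr 1; ring
    simp_rw [this]
    rw [MeasureTheory.integral_Icc_eq_integral_Ioc,
      ← intervalIntegral.integral_of_le (by linarith : -(L/2) ≤ L/2),
      intervalIntegral.integral_comp_add_right (fun t => Gg t) ((q:ℝ)*L - b)]
    congr 1 <;> ring
  simp_rw [key]
  exact hasSum_Gg (-b - L/2) hL

lemma Ee_nonneg (n : ℤ) : 0 ≤ Ee n := mul_nonneg (Real.exp_pos _).le (Real.exp_pos _).le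

@[continuity] lemma Gg_cont : Continuous Gg := by
  unfold Gg; continuity


/-- kernel estimate for the magnetic projector: there is a universal
constant `C` with `sup_{x ∈ K_L} ∫_{K_L} |Π_L(x,y)| dy ≤ C` for all `L ≥ 1`. -/
theorem stmt13 : ∃ C : ℝ, 0 < C ∧
    ∀ L : ℝ, 1 ≤ L → ∀ x ∈ Kset L, (∫ y in Kset L, ‖PiL L x y‖) ≤ C := by
  refine ⟨8, by norm_num, fun L hL x hx => ?_⟩
  have hL0 : (0:ℝ) < L := by linarith
  have hπ : (0:ℝ) < Real.sqrt Real.pi := Real.sqrt_pos.2 Real.pi_pos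
  obtain ⟨hx1, hx2⟩ := hx
  rw [Set.mem_Icc] at hx1 hx2
  -- comparison family
  set f : ℤ × ℤ → ℝ × ℝ → ℝ := fun kq y =>
    Gg ((kq.2:ℝ)*L - x.1 + y.1) * Gg ((kq.1:ℝ)*L + x.2 - y.2) with hf
  set M : ℤ × ℤ → ℝ := fun kq => Ee kq.1 * Ee kq.2 with hM
  have hMsum : Summable M :=
    Summable.mul_of_nonneg sumE sumE (fun n => Ee_nonneg n) (fun n => Ee_nonneg n)
  have hfnn : ∀ kq y, 0 ≤ f kq y := fun kq y => mul_nonneg (Gg_nonneg _) (Gg_nonneg _)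
  have hfM : ∀ kq : ℤ × ℤ, ∀ y ∈ Kset L, f kq y ≤ M kq := by
    rintro ⟨k, q⟩ y ⟨hy1, hy2⟩
    rw [Set.mem_Icc] at hy1 hy2
    have h1 : Gg ((q:ℝ)*L - x.1 + y.1) ≤ Ee q := by
      rw [show (q:ℝ)*L - x.1 + y.1 = (q:ℝ)*L + (y.1 - x.1) by ring]
      exact Gg_le_Ee hL q (abs_le.2 ⟨by linarith, by linarith⟩)
    have h2 : Gg ((k:ℝ)*L + x.2 - y.2) ≤ Ee k := by
      rw [show (k:ℝ)*L + x.2 - y.2 = (k:ℝ)*L + (x.2 - y.2) by ring]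
      exact Gg_le_Ee hL k (abs_le.2 ⟨by linarith, by linarith⟩)
    calc f (k, q) y ≤ Ee q * Ee k :=
          mul_le_mul h1 h2 (Gg_nonneg _) (Ee_nonneg _)
    _ = M (k, q) := mul_comm _ _
  -- continuity of each f kq and of the sum
  have hfc : ∀ kq : ℤ × ℤ, Continuous (f kq) := by
    intro kq
    apply Continuous.mul
    · exact Gg_cont.comp (by continuity)
    · exact Gg_cont.comp (by continuity)
  have hKcomp : IsCompact (Kset L) := IsCompact.prod isCompact_Icc isCompact_Icc
  have hKm : MeasurableSet (Kset L) := measurableSet_Icc.prod measurableSet_Icc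
  have hFcont : ContinuousOn (fun y => ∑' kq, f kq y) (Kset L) := by
    refine continuousOn_tsum (fun kq => (hfc kq).continuousOn) hMsum ?_
    intro kq y hy
    rw [Real.norm_eq_abs, abs_of_nonneg (hfnn kq y)]
    exact hfM kq y hy
  have hFint : IntegrableOn (fun y => ∑' kq, f kq y) (Kset L) :=
    hFcont.integrableOn_compact hKcomp
  -- pointwise bound
  have hnorm : ∀ y ∈ Kset L, ‖PiL L x y‖ ≤ (1 / Real.sqrt Real.pi) * ∑' kq, f kq y := by
    intro y hy
    have hsumf : Summable (fun kq => f kq y) :=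
      hMsum.of_nonneg_of_le (fun kq => hfnn kq y) (fun kq => hfM kq y hy)
    simp only [PiL]
    rw [norm_mul, Complex.norm_real, Real.norm_eq_abs,
      abs_of_nonneg (by positivity : (0:ℝ) ≤ 1 / Real.sqrt Real.pi)]
    refine mul_le_mul_of_nonneg_left ?_ (by positivity : (0:ℝ) ≤ 1 / Real.sqrt Real.pi)
    refine (norm_tsum_le_tsum_norm ?_).trans_eq (tsum_congr (fun kq => term_norm L x y kq))
    exact hsumf.congr fun kq => (term_norm L x y kq).symm
  -- the two one-dimensional sums
  set Av : ℤ → ℝ := fun k => ∫ t in Set.Icc (-(L/2)) (L/2), Gg ((k:ℝ)*L + x.2 - t) with hAv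
  set Bv : ℤ → ℝ := fun q => ∫ t in Set.Icc (-(L/2)) (L/2), Gg ((q:ℝ)*L - x.1 + t) with hBv
  have hA : HasSum Av (2 * Real.sqrt Real.pi) := hasSum_A hL0 x.2
  have hB : HasSum Bv (2 * Real.sqrt Real.pi) := hasSum_B hL0 x.1
  have hAnn : ∀ k, 0 ≤ Av k := fun k =>
    setIntegral_nonneg measurableSet_Icc (fun t _ => Gg_nonneg _)
  have hBnn : ∀ q, 0 ≤ Bv q := fun q =>
    setIntegral_nonneg measurableSet_Icc (fun t _ => Gg_nonneg _)
  -- value of each 2d integral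
  have h2 : ∀ kq : ℤ × ℤ, (∫ y in Kset L, f kq y) = Bv kq.2 * Av kq.1 := by
    intro kq
    rw [hf, Kset, MeasureTheory.Measure.volume_eq_prod, ← Measure.prod_restrict]
    exact integral_prod_mul (fun t => Gg ((kq.2:ℝ)*L - x.1 + t))
      (fun t => Gg ((kq.1:ℝ)*L + x.2 - t))
  have hS : Summable (fun kq : ℤ × ℤ => Bv kq.2 * Av kq.1) := by
    have hS' : Summable (fun p : ℤ × ℤ => Bv p.1 * Av p.2) :=
      Summable.mul_of_nonneg hB.summable hA.summable hBnn hAnn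
    exact ((Equiv.prodComm ℤ ℤ).summable_iff.mpr hS').congr (fun kq => rfl)
  have hBn : Summable fun q => ‖Bv q‖ :=
    hB.summable.congr (fun q => (Real.norm_of_nonneg (hBnn q)).symm)
  have hAn : Summable fun k => ‖Av k‖ :=
    hA.summable.congr (fun k => (Real.norm_of_nonneg (hAnn k)).symm)
  have htsum2 : (∑' kq : ℤ × ℤ, Bv kq.2 * Av kq.1) = 4 * Real.pi := by
    calc (∑' kq : ℤ × ℤ, Bv kq.2 * Av kq.1)
        = ∑' z : ℤ × ℤ, Bv z.1 * Av z.2 :=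
          (Equiv.prodComm ℤ ℤ).tsum_eq (fun z : ℤ × ℤ => Bv z.1 * Av z.2)
    _ = (∑' q, Bv q) * ∑' k, Av k := (tsum_mul_tsum_of_summable_norm hBn hAn).symm
    _ = (2 * Real.sqrt Real.pi) * (2 * Real.sqrt Real.pi) := by
        rw [hA.tsum_eq, hB.tsum_eq]
    _ = 4 * Real.pi := by
        rw [show (2 * Real.sqrt Real.pi) * (2 * Real.sqrt Real.pi)
          = 4 * (Real.sqrt Real.pi * Real.sqrt Real.pi) by ring,
          Real.mul_self_sqrt Real.pi_pos.le]
  -- lintegral finiteness and swap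
  have hlin : ∀ kq : ℤ × ℤ, (∫⁻ y in Kset L, ‖f kq y‖₊) = ENNReal.ofReal (Bv kq.2 * Av kq.1) := by
    intro kq
    rw [← h2 kq, ofReal_integral_eq_lintegral_ofReal
      (((hfc kq).continuousOn).integrableOn_compact hKcomp) (ae_of_all _ (fun y => hfnn kq y))]
    exact lintegral_congr fun y => Real.enorm_eq_ofReal (hfnn kq y)
  have hfin : (∑' kq : ℤ × ℤ, ∫⁻ y in Kset L, ‖f kq y‖₊) ≠ ⊤ := by
    simp_rw [hlin]
    rw [← ENNReal.ofReal_tsum_of_nonneg (fun kq => mul_nonneg (hBnn _) (hAnn _)) hS]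
    exact ENNReal.ofReal_ne_top
  have hswap : (∫ y in Kset L, ∑' kq, f kq y) = ∑' kq : ℤ × ℤ, ∫ y in Kset L, f kq y :=
    integral_tsum (fun kq => (hfc kq).aestronglyMeasurable) hfin
  -- assemble
  have step1 : (∫ y in Kset L, ‖PiL L x y‖)
      ≤ ∫ y in Kset L, (1 / Real.sqrt Real.pi) * ∑' kq, f kq y := by
    refine integral_mono_of_nonneg (ae_of_all _ fun y => norm_nonneg _)
      (hFint.const_mul _) ?_
    filter_upwards [ae_restrict_mem hKm] with y hy using hnorm y hy
  calc (∫ y in Kset L, ‖PiL L x y‖)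
      ≤ ∫ y in Kset L, (1 / Real.sqrt Real.pi) * ∑' kq, f kq y := step1
  _ = (1 / Real.sqrt Real.pi) * ∫ y in Kset L, ∑' kq, f kq y :=
      MeasureTheory.integral_const_mul _ _
  _ = (1 / Real.sqrt Real.pi) * (4 * Real.pi) := by
      rw [hswap, tsum_congr h2, htsum2]
  _ ≤ 8 := by
      have h4 : Real.sqrt Real.pi ≤ 2 := by
        rw [show (2:ℝ) = Real.sqrt 4 by
          rw [show (4:ℝ) = 2^2 by norm_num, Real.sqrt_sq (by norm_num : (0:ℝ) ≤ 2)]]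
        exact Real.sqrt_le_sqrt (by linarith [Real.pi_le_four])
      have h5 : Real.sqrt Real.pi * Real.sqrt Real.pi = Real.pi :=
        Real.mul_self_sqrt Real.pi_pos.le
      rw [div_mul_eq_mul_div, one_mul, div_le_iff₀ hπ]
      nlinarith
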